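/- For every smooth complex-valued function f on (0,π)×ℝ the operator identity 𝓛₋₁†𝓛₀†𝓛₁†𝓛₂†𝓛₋₁𝓛₀𝓛₁𝓛₂ f = (𝓛₋₁†𝓛₂)²(𝓛₋₁†𝓛₂ − 2)² f holds at every point, where (𝓛₋₁†𝓛₂)² denotes the twofold iteration of the operator u ↦ 𝓛₋₁†(𝓛₂u) and (𝓛₋₁†𝓛₂ − 2)² the twofold iteration of u ↦ 𝓛₋₁†(𝓛₂u) − 2u. -/

import Mathlib

/- Spin-raising and spin-lowering operators on functions f(ϑ, φ) on (0,π) × ℝ. -/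

noncomputable section

open Filter Topology Set

namespace Ang

set_option maxRecDepth 100000
set_option maxHeartbeats 2000000

abbrev F2 : Type := ℝ → ℝ → ℂ

/-- `∂_ϑ`. -/
def dTh (f : F2) : F2 := fun ϑ φ => deriv (fun x => f x φ) ϑ
/-- `∂_φ`. -/
def dPh (f : F2) : F2 := fun ϑ φ => deriv (fun y => f ϑ y) φ

/-- `𝓛ₙ f = ∂_ϑ f + (i/sin ϑ)∂_φ f + n cot ϑ · f`. -/
def Lo (n : ℤ) (f : F2) : F2 := fun ϑ φ =>
  dTh f ϑ φ + Complex.I * (Real.sin ϑ : ℂ)⁻¹ * dPh f ϑ φ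
    + (n : ℂ) * ((Real.cos ϑ / Real.sin ϑ : ℝ) : ℂ) * f ϑ φ

/-- `𝓛ₙ† f = ∂_ϑ f − (i/sin ϑ)∂_φ f + n cot ϑ · f`. -/
def Ld (n : ℤ) (f : F2) : F2 := fun ϑ φ =>
  dTh f ϑ φ - Complex.I * (Real.sin ϑ : ℂ)⁻¹ * dPh f ϑ φ
    + (n : ℂ) * ((Real.cos ϑ / Real.sin ϑ : ℝ) : ℂ) * f ϑ φ

/-- `f` is smooth on `(0,π) × ℝ`. -/
def Smooth2 (f : F2) : Prop :=
  ContDiffOn ℝ (⊤ : ℕ∞) (fun p : ℝ × ℝ => f p.1 p.2)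
    (Set.Ioo 0 Real.pi ×ˢ (Set.univ : Set ℝ))

/-- The operator `u ↦ 𝓛₋₁†(𝓛₂ u)`. -/
def Bop (f : F2) : F2 := Ld (-1) (Lo 2 f)

/-- The operator `u ↦ 𝓛₋₁†(𝓛₂ u) − 2u`. -/
def BopM (f : F2) : F2 := fun ϑ φ => Bop f ϑ φ - 2 * f ϑ φ

-- ### infrastructure
def S2 : Set (ℝ × ℝ) := Set.Ioo 0 Real.pi ×ˢ (Set.univ : Set ℝ)

lemma isOpen_S2 : IsOpen S2 := isOpen_Ioo.prod isOpen_univ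

lemma mem_S2 {ϑ : ℝ} (h : ϑ ∈ Set.Ioo 0 Real.pi) (φ : ℝ) : (ϑ, φ) ∈ S2 := ⟨h, trivial⟩

lemma sin_ne {ϑ : ℝ} (h : ϑ ∈ Set.Ioo 0 Real.pi) : Real.sin ϑ ≠ 0 :=
  ne_of_gt (Real.sin_pos_of_pos_of_lt_pi h.1 h.2)

lemma smooth2_iff (g : F2) : Smooth2 g ↔
    ContDiffOn ℝ (⊤ : ℕ∞) (fun p : ℝ × ℝ => g p.1 p.2) S2 := Iff.rfl

variable {g : F2} {ϑ φ : ℝ}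

lemma lineTh (ϑ φ : ℝ) : HasDerivAt (fun x : ℝ => (x, φ)) ((1 : ℝ), (0 : ℝ)) ϑ :=
  (hasDerivAt_id ϑ).prodMk (hasDerivAt_const ϑ φ)

lemma linePh (ϑ φ : ℝ) : HasDerivAt (fun y : ℝ => (ϑ, y)) ((0 : ℝ), (1 : ℝ)) φ :=
  (hasDerivAt_const φ ϑ).prodMk (hasDerivAt_id φ)

lemma Smooth2.diffAt (hg : Smooth2 g) (h : ϑ ∈ Set.Ioo 0 Real.pi) :
    DifferentiableAt ℝ (fun p : ℝ × ℝ => g p.1 p.2) (ϑ, φ) :=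
  (hg.contDiffAt (isOpen_S2.mem_nhds (mem_S2 h φ))).differentiableAt (by simp)

lemma Smooth2.hasDerivAt_th (hg : Smooth2 g) (h : ϑ ∈ Set.Ioo 0 Real.pi) :
    HasDerivAt (fun x => g x φ) (dTh g ϑ φ) ϑ := by
  have h0 := HasFDerivAt.comp_hasDerivAt (f := fun x : ℝ => (x, φ)) ϑ
    (hg.diffAt h).hasFDerivAt (lineTh ϑ φ)
  have h1 : HasDerivAt (fun x => g x φ)
      (fderiv ℝ (fun p : ℝ × ℝ => g p.1 p.2) (ϑ, φ) (1, 0)) ϑ := h0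
  have : dTh g ϑ φ = fderiv ℝ (fun p : ℝ × ℝ => g p.1 p.2) (ϑ, φ) (1, 0) := h1.deriv
  rw [this]; exact h1

lemma Smooth2.hasDerivAt_ph (hg : Smooth2 g) (h : ϑ ∈ Set.Ioo 0 Real.pi) :
    HasDerivAt (fun y => g ϑ y) (dPh g ϑ φ) φ := by
  have h0 := HasFDerivAt.comp_hasDerivAt (f := fun y : ℝ => (ϑ, y)) φ
    (hg.diffAt h).hasFDerivAt (linePh ϑ φ)
  have h1 : HasDerivAt (fun y => g ϑ y)
      (fderiv ℝ (fun p : ℝ × ℝ => g p.1 p.2) (ϑ, φ) (0, 1)) φ := h0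
  have : dPh g ϑ φ = fderiv ℝ (fun p : ℝ × ℝ => g p.1 p.2) (ϑ, φ) (0, 1) := h1.deriv
  rw [this]; exact h1

lemma Smooth2.dTh_eq (hg : Smooth2 g) (h : ϑ ∈ Set.Ioo 0 Real.pi) :
    dTh g ϑ φ = fderiv ℝ (fun p : ℝ × ℝ => g p.1 p.2) (ϑ, φ) (1, 0) :=
  (HasFDerivAt.comp_hasDerivAt (f := fun x : ℝ => (x, φ)) ϑ
    (hg.diffAt h).hasFDerivAt (lineTh ϑ φ)).deriv

lemma Smooth2.dPh_eq (hg : Smooth2 g) (h : ϑ ∈ Set.Ioo 0 Real.pi) :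
    dPh g ϑ φ = fderiv ℝ (fun p : ℝ × ℝ => g p.1 p.2) (ϑ, φ) (0, 1) :=
  (HasFDerivAt.comp_hasDerivAt (f := fun y : ℝ => (ϑ, y)) φ
    (hg.diffAt h).hasFDerivAt (linePh ϑ φ)).deriv

lemma Smooth2.fderiv_smooth (hg : Smooth2 g) :
    ContDiffOn ℝ (⊤ : ℕ∞) (fderiv ℝ (fun p : ℝ × ℝ => g p.1 p.2)) S2 := by
  have := hg.fderiv_of_isOpen isOpen_S2 (m := (⊤ : ℕ∞)) (by exact_mod_cast le_top)
  exact this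

lemma Smooth2.dTh_smooth (hg : Smooth2 g) : Smooth2 (dTh g) := by
  rw [smooth2_iff]
  have h1 : ContDiffOn ℝ (⊤ : ℕ∞)
      (fun p : ℝ × ℝ => fderiv ℝ (fun q : ℝ × ℝ => g q.1 q.2) p ((1 : ℝ), (0 : ℝ))) S2 :=
    hg.fderiv_smooth.clm_apply contDiffOn_const
  exact h1.congr fun p hp => hg.dTh_eq hp.1

lemma Smooth2.dPh_smooth (hg : Smooth2 g) : Smooth2 (dPh g) := by
  rw [smooth2_iff]
  have h1 : ContDiffOn ℝ (⊤ : ℕ∞)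
      (fun p : ℝ × ℝ => fderiv ℝ (fun q : ℝ × ℝ => g q.1 q.2) p ((0 : ℝ), (1 : ℝ))) S2 :=
    hg.fderiv_smooth.clm_apply contDiffOn_const
  exact h1.congr fun p hp => hg.dPh_eq hp.1

lemma Smooth2.clairaut (hg : Smooth2 g) (h : ϑ ∈ Set.Ioo 0 Real.pi) :
    dTh (dPh g) ϑ φ = dPh (dTh g) ϑ φ := by
  set G := fun p : ℝ × ℝ => g p.1 p.2 with hG
  have hsym : IsSymmSndFDerivAt ℝ G (ϑ, φ) :=
    (hg.contDiffAt (isOpen_S2.mem_nhds (mem_S2 h φ))).isSymmSndFDerivAt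
      (by rw [minSmoothness_of_isRCLikeNormedField, show (2 : WithTop ℕ∞) = ((2:ℕ∞) : WithTop ℕ∞) from rfl]
          exact WithTop.coe_le_coe.mpr (le_top : (2:ℕ∞) ≤ ⊤))
  have hD : DifferentiableAt ℝ (fderiv ℝ G) (ϑ, φ) :=
    ((hg.fderiv_smooth.contDiffAt (isOpen_S2.mem_nhds (mem_S2 h φ)))).differentiableAt
      (by simp)
  -- LHS
  have hl0 := HasFDerivAt.comp_hasDerivAt (f := fun x : ℝ => (x, φ)) ϑ
      hD.hasFDerivAt (lineTh ϑ φ)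
  have hl1 : HasDerivAt (fun x => fderiv ℝ G (x, φ) ((0 : ℝ), (1 : ℝ)))
      (fderiv ℝ (fderiv ℝ G) (ϑ, φ) (1, 0) (0, 1)) ϑ := by
    have := hl0.clm_apply (hasDerivAt_const ϑ ((0 : ℝ), (1 : ℝ)))
    simpa using this
  have hL : dTh (dPh g) ϑ φ = fderiv ℝ (fderiv ℝ G) (ϑ, φ) (1, 0) (0, 1) := by
    have he : (fun x => dPh g x φ) =ᶠ[nhds ϑ] (fun x => fderiv ℝ G (x, φ) ((0:ℝ), (1:ℝ))) := by
      filter_upwards [isOpen_Ioo.eventually_mem h] with x hx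
      exact hg.dPh_eq hx
    show deriv (fun x => dPh g x φ) ϑ = _
    rw [he.deriv_eq]
    exact hl1.deriv
  -- RHS
  have hr0 := HasFDerivAt.comp_hasDerivAt (f := fun y : ℝ => (ϑ, y)) φ
      hD.hasFDerivAt (linePh ϑ φ)
  have hr1 : HasDerivAt (fun y => fderiv ℝ G (ϑ, y) ((1 : ℝ), (0 : ℝ)))
      (fderiv ℝ (fderiv ℝ G) (ϑ, φ) (0, 1) (1, 0)) φ := by
    have := hr0.clm_apply (hasDerivAt_const φ ((1 : ℝ), (0 : ℝ)))
    simpa using this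
  have hR : dPh (dTh g) ϑ φ = fderiv ℝ (fderiv ℝ G) (ϑ, φ) (0, 1) (1, 0) := by
    have he : (fun y => dTh g ϑ y) =ᶠ[nhds φ] (fun y => fderiv ℝ G (ϑ, y) ((1:ℝ), (0:ℝ))) :=
      Filter.Eventually.of_forall fun y => hg.dTh_eq h
    show deriv (fun y => dTh g ϑ y) φ = _
    rw [he.deriv_eq]
    exact hr1.deriv
  rw [hL, hR, hsym (1, 0) (0, 1)]

/-- locality of `dTh`. -/
lemma dTh_congr {g h : F2} (he : ∀ x ∈ Set.Ioo 0 Real.pi, ∀ y, g x y = h x y)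
    (hϑ : ϑ ∈ Set.Ioo 0 Real.pi) : dTh g ϑ φ = dTh h ϑ φ := by
  have : (fun x => g x φ) =ᶠ[nhds ϑ] (fun x => h x φ) := by
    filter_upwards [isOpen_Ioo.eventually_mem hϑ] with x hx
    exact he x hx φ
  exact this.deriv_eq

lemma dPh_congr {g h : F2} (he : ∀ x ∈ Set.Ioo 0 Real.pi, ∀ y, g x y = h x y)
    (hϑ : ϑ ∈ Set.Ioo 0 Real.pi) : dPh g ϑ φ = dPh h ϑ φ := by
  show deriv (fun y => g ϑ y) φ = deriv (fun y => h ϑ y) φ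
  congr 1
  ext y
  exact he ϑ hϑ y

-- ### iterated partial derivatives
def D (i j : ℕ) (f : F2) : F2 := dTh^[i] (dPh^[j] f)

variable {f : F2}

lemma D_zero : D 0 0 f = f := rfl

lemma Smooth2.D_smooth (hf : Smooth2 f) (i j : ℕ) : Smooth2 (D i j f) := by
  have hj : Smooth2 (dPh^[j] f) := by
    induction j with
    | zero => exact hf
    | succ j ih => rw [Function.iterate_succ_apply']; exact ih.dPh_smooth
  induction i with
  | zero => exact hj
  | succ i ih => rw [D, Function.iterate_succ_apply']; exact ih.dTh_smooth

lemma D_th (f : F2) (i j : ℕ) : dTh (D i j f) = D (i + 1) j f :=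
  (Function.iterate_succ_apply' dTh i (dPh^[j] f)).symm

lemma Smooth2.D_ph (hf : Smooth2 f) (i j : ℕ) (h : ϑ ∈ Set.Ioo 0 Real.pi) (φ : ℝ) :
    dPh (D i j f) ϑ φ = D i (j + 1) f ϑ φ := by
  induction i generalizing ϑ φ with
  | zero =>
    show dPh (dPh^[j] f) ϑ φ = dPh^[j+1] f ϑ φ
    rw [Function.iterate_succ_apply' dPh j f]
  | succ i ih =>
    have e1 : D (i+1) j f = dTh (D i j f) := (D_th f i j).symm
    have e2 : D (i+1) (j+1) f = dTh (D i (j+1) f) := (D_th f i (j+1)).symm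
    rw [e1, e2, ← (hf.D_smooth i j).clairaut h]
    exact dTh_congr (fun x hx y => ih hx y) h

-- ### formal terms
abbrev Tm : Type := ℕ × ℕ × ℕ × ℕ × ℤ × ℤ

def Cc (ϑ : ℝ) : ℂ := ((Real.cos ϑ / Real.sin ϑ : ℝ) : ℂ)
def Sc (ϑ : ℝ) : ℂ := (Real.sin ϑ : ℂ)⁻¹

def rT (f : F2) : Tm → F2
  | (i, j, a, b, x, y) => fun ϑ φ =>
      ((x : ℂ) + (y : ℂ) * Complex.I) * Cc ϑ ^ a * Sc ϑ ^ b * D i j f ϑ φ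

def rL (f : F2) (L : List Tm) : F2 := fun ϑ φ => (L.map fun t => rT f t ϑ φ).sum

lemma rL_nil : rL f [] ϑ φ = 0 := rfl
lemma rL_cons {t : Tm} {L : List Tm} : rL f (t :: L) ϑ φ = rT f t ϑ φ + rL f L ϑ φ := by
  simp [rL]
lemma rL_append {L M : List Tm} : rL f (L ++ M) ϑ φ = rL f L ϑ φ + rL f M ϑ φ := by
  simp [rL]

def dThT : Tm → List Tm
  | (i, j, a, b, x, y) =>
      [(i + 1, j, a, b, x, y),
       (i, j, a - 1, b + 2, -(a : ℤ) * x, -(a : ℤ) * y),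
       (i, j, a + 1, b, -(b : ℤ) * x, -(b : ℤ) * y)]

def phN : Tm → Tm | (i, j, a, b, x, y) => (i, j + 1, a, b, x, y)
def phT : Tm → Tm | (i, j, a, b, x, y) => (i, j + 1, a, b + 1, -y, x)
def phTd : Tm → Tm | (i, j, a, b, x, y) => (i, j + 1, a, b + 1, y, -x)
def cT (n : ℤ) : Tm → Tm | (i, j, a, b, x, y) => (i, j, a + 1, b, n * x, n * y)
def smT (c : ℤ) : Tm → Tm | (i, j, a, b, x, y) => (i, j, a, b, c * x, c * y)

def loF (n : ℤ) (L : List Tm) : List Tm := L.flatMap dThT ++ L.map phT ++ L.map (cT n)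
def ldF (n : ℤ) (L : List Tm) : List Tm := L.flatMap dThT ++ L.map phTd ++ L.map (cT n)

-- derivatives of the coefficients
lemma hasDerivAt_Cc (h : ϑ ∈ Set.Ioo 0 Real.pi) : HasDerivAt Cc (-(Sc ϑ ^ 2)) ϑ := by
  have hs := sin_ne h
  have hr : HasDerivAt (fun x => Real.cos x / Real.sin x) (-((Real.sin ϑ)⁻¹ ^ 2)) ϑ := by
    have h1 := (Real.hasDerivAt_cos ϑ).fun_div (Real.hasDerivAt_sin ϑ) hs
    refine h1.congr_deriv ?_
    field_simp
    linear_combination (-1) * Real.sin_sq_add_cos_sq ϑ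
  have h2 := hr.ofReal_comp (z := ϑ)
  have : ((-((Real.sin ϑ)⁻¹ ^ 2) : ℝ) : ℂ) = -(Sc ϑ ^ 2) := by
    simp [Sc]
  rw [this] at h2
  exact h2

lemma hasDerivAt_Sc (h : ϑ ∈ Set.Ioo 0 Real.pi) : HasDerivAt Sc (-(Cc ϑ * Sc ϑ)) ϑ := by
  have hs := sin_ne h
  have hr : HasDerivAt (fun x => (Real.sin x)⁻¹)
      (-(Real.cos ϑ / Real.sin ϑ * (Real.sin ϑ)⁻¹)) ϑ := by
    have h1 := (Real.hasDerivAt_sin ϑ).fun_inv hs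
    refine h1.congr_deriv ?_
    field_simp
  have h2 := hr.ofReal_comp (z := ϑ)
  have : ((-(Real.cos ϑ / Real.sin ϑ * (Real.sin ϑ)⁻¹) : ℝ) : ℂ) = -(Cc ϑ * Sc ϑ) := by
    simp [Cc, Sc]
  rw [this] at h2
  have he : (fun x : ℝ => (((Real.sin x)⁻¹ : ℝ) : ℂ)) = Sc := by
    funext x; simp [Sc]
  rwa [he] at h2


lemma hasDerivAt_cpow {c : ℝ → ℂ} {c' : ℂ} {x : ℝ} (hc : HasDerivAt c c' x) (n : ℕ) :
    HasDerivAt (fun y => c y ^ n) ((n : ℂ) * c x ^ (n - 1) * c') x := by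
  induction n with
  | zero => simpa using hasDerivAt_const x (1 : ℂ)
  | succ n ih =>
    have h1 := ih.fun_mul hc
    have he : (fun y => c y ^ n * c y) = fun y => c y ^ (n + 1) := by
      funext y; rw [← pow_succ]
    rw [he] at h1
    refine h1.congr_deriv (Eq.symm ?_)
    rcases n with _ | n
    · simp
    · simp only [Nat.add_sub_cancel]
      push_cast
      ring

lemma hasDerivAt_D_th (hf : Smooth2 f) (i j : ℕ) (h : ϑ ∈ Set.Ioo 0 Real.pi) :
    HasDerivAt (fun x => D i j f x φ) (D (i + 1) j f ϑ φ) ϑ := by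
  have h1 := (hf.D_smooth i j).hasDerivAt_th (φ := φ) h
  rwa [D_th] at h1

lemma hasDerivAt_rT_th (hf : Smooth2 f) (h : ϑ ∈ Set.Ioo 0 Real.pi) (t : Tm) :
    HasDerivAt (fun x => rT f t x φ) (rL f (dThT t) ϑ φ) ϑ := by
  obtain ⟨i, j, a, b, x, y⟩ := t
  have hD := hasDerivAt_D_th (φ := φ) hf i j h
  have hca : HasDerivAt (fun u => Cc u ^ a)
      ((a : ℂ) * Cc ϑ ^ (a - 1) * -(Sc ϑ ^ 2)) ϑ := hasDerivAt_cpow (hasDerivAt_Cc h) a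
  have hcb : HasDerivAt (fun u => Sc u ^ b)
      ((b : ℂ) * Sc ϑ ^ (b - 1) * -(Cc ϑ * Sc ϑ)) ϑ := hasDerivAt_cpow (hasDerivAt_Sc h) b
  have h1 := (hasDerivAt_const ϑ ((x : ℂ) + (y : ℂ) * Complex.I)).fun_mul hca
  have h2 := h1.fun_mul hcb
  have hchain := h2.fun_mul hD
  simp only [rT, dThT, rL, List.map_cons, List.map_nil, List.sum_cons, List.sum_nil]
  refine hchain.congr_deriv (Eq.symm ?_)
  rcases b with _ | b <;> push_cast <;> ring

lemma hasDerivAt_rT_ph (hf : Smooth2 f) (h : ϑ ∈ Set.Ioo 0 Real.pi) (t : Tm) :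
    HasDerivAt (fun y => rT f t ϑ y) (rT f (phN t) ϑ φ) φ := by
  obtain ⟨i, j, a, b, x, y⟩ := t
  have hD := (hf.D_smooth i j).hasDerivAt_ph (φ := φ) h
  rw [hf.D_ph i j h φ] at hD
  exact hD.const_mul (((x : ℂ) + (y : ℂ) * Complex.I) * Cc ϑ ^ a * Sc ϑ ^ b)

lemma hasDerivAt_rL_th (hf : Smooth2 f) (h : ϑ ∈ Set.Ioo 0 Real.pi) (L : List Tm) :
    HasDerivAt (fun x => rL f L x φ) (rL f (L.flatMap dThT) ϑ φ) ϑ := by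
  induction L with
  | nil => simpa [rL] using hasDerivAt_const ϑ (0 : ℂ)
  | cons t L ih =>
    have h1 := (hasDerivAt_rT_th (φ := φ) hf h t).fun_add ih
    have e1 : (fun x => rT f t x φ + rL f L x φ) = fun x => rL f (t :: L) x φ := by
      funext x; rw [rL_cons]
    rw [e1] at h1
    have e2 : rL f (dThT t) ϑ φ + rL f (L.flatMap dThT) ϑ φ
        = rL f ((t :: L).flatMap dThT) ϑ φ := by
      rw [List.flatMap_cons, rL_append]
    rwa [e2] at h1

lemma hasDerivAt_rL_ph (hf : Smooth2 f) (h : ϑ ∈ Set.Ioo 0 Real.pi) (L : List Tm) :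
    HasDerivAt (fun y => rL f L ϑ y) (rL f (L.map phN) ϑ φ) φ := by
  induction L with
  | nil => simpa [rL] using hasDerivAt_const φ (0 : ℂ)
  | cons t L ih =>
    have h1 := (hasDerivAt_rT_ph (φ := φ) hf h t).fun_add ih
    have e1 : (fun y => rT f t ϑ y + rL f L ϑ y) = fun y => rL f (t :: L) ϑ y := by
      funext y; rw [rL_cons]
    rw [e1] at h1
    have e2 : rT f (phN t) ϑ φ + rL f (L.map phN) ϑ φ
        = rL f ((t :: L).map phN) ϑ φ := by
      rw [List.map_cons, rL_cons]
    rwa [e2] at h1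

lemma rL_scale {c : ℂ} {g : Tm → Tm}
    (hg : ∀ t : Tm, c * rT f t ϑ φ = rT f (g t) ϑ φ) (L : List Tm) :
    c * rL f L ϑ φ = rL f (L.map g) ϑ φ := by
  induction L with
  | nil => simp [rL]
  | cons t L ih => rw [List.map_cons, rL_cons, rL_cons, mul_add, hg t, ih]

def phB : Tm → Tm | (i, j, a, b, x, y) => (i, j, a, b + 1, -y, x)
def phBd : Tm → Tm | (i, j, a, b, x, y) => (i, j, a, b + 1, y, -x)

lemma phB_phN : phB ∘ phN = phT := by
  funext t; obtain ⟨i, j, a, b, x, y⟩ := t; rfl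

lemma phBd_phN : phBd ∘ phN = phTd := by
  funext t; obtain ⟨i, j, a, b, x, y⟩ := t; rfl

lemma scale_phB (t : Tm) :
    Complex.I * Sc ϑ * rT f t ϑ φ = rT f (phB t) ϑ φ := by
  obtain ⟨i, j, a, b, x, y⟩ := t
  simp only [rT, phB]
  push_cast
  linear_combination ((y : ℂ) * Cc ϑ ^ a * Sc ϑ ^ (b + 1) * D i j f ϑ φ) * Complex.I_sq

lemma scale_phBd (t : Tm) :
    -(Complex.I * Sc ϑ) * rT f t ϑ φ = rT f (phBd t) ϑ φ := by
  obtain ⟨i, j, a, b, x, y⟩ := t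
  simp only [rT, phBd]
  push_cast
  linear_combination (-(y : ℂ) * Cc ϑ ^ a * Sc ϑ ^ (b + 1) * D i j f ϑ φ) * Complex.I_sq

lemma scale_cT (n : ℤ) (t : Tm) :
    (n : ℂ) * Cc ϑ * rT f t ϑ φ = rT f (cT n t) ϑ φ := by
  obtain ⟨i, j, a, b, x, y⟩ := t
  simp only [rT, cT]
  push_cast
  ring

lemma scale_smT (c : ℤ) (t : Tm) :
    (c : ℂ) * rT f t ϑ φ = rT f (smT c t) ϑ φ := by
  obtain ⟨i, j, a, b, x, y⟩ := t
  simp only [rT, smT]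
  push_cast
  ring

lemma lo_realize (hf : Smooth2 f) (h : ϑ ∈ Set.Ioo 0 Real.pi) (n : ℤ) (L : List Tm) :
    Lo n (rL f L) ϑ φ = rL f (loF n L) ϑ φ := by
  have h1 : dTh (rL f L) ϑ φ = rL f (L.flatMap dThT) ϑ φ :=
    (hasDerivAt_rL_th (φ := φ) hf h L).deriv
  have h2 : dPh (rL f L) ϑ φ = rL f (L.map phN) ϑ φ :=
    (hasDerivAt_rL_ph (φ := φ) hf h L).deriv
  show dTh (rL f L) ϑ φ + Complex.I * Sc ϑ * dPh (rL f L) ϑ φ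
      + (n : ℂ) * Cc ϑ * rL f L ϑ φ = _
  rw [h1, h2]
  have h3 : Complex.I * Sc ϑ * rL f (L.map phN) ϑ φ = rL f (L.map phT) ϑ φ := by
    have h3' := rL_scale (f := f) (ϑ := ϑ) (φ := φ) (c := Complex.I * Sc ϑ) (g := phB)
      (fun t => scale_phB t) (L.map phN)
    rw [List.map_map, phB_phN] at h3'
    exact h3'
  have h4 : (n : ℂ) * Cc ϑ * rL f L ϑ φ = rL f (L.map (cT n)) ϑ φ :=
    rL_scale (f := f) (ϑ := ϑ) (φ := φ) (c := (n : ℂ) * Cc ϑ) (g := cT n)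
      (fun t => scale_cT n t) L
  rw [h3, h4, loF, rL_append, rL_append]

lemma ld_realize (hf : Smooth2 f) (h : ϑ ∈ Set.Ioo 0 Real.pi) (n : ℤ) (L : List Tm) :
    Ld n (rL f L) ϑ φ = rL f (ldF n L) ϑ φ := by
  have h1 : dTh (rL f L) ϑ φ = rL f (L.flatMap dThT) ϑ φ :=
    (hasDerivAt_rL_th (φ := φ) hf h L).deriv
  have h2 : dPh (rL f L) ϑ φ = rL f (L.map phN) ϑ φ :=
    (hasDerivAt_rL_ph (φ := φ) hf h L).deriv
  show dTh (rL f L) ϑ φ - Complex.I * Sc ϑ * dPh (rL f L) ϑ φ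
      + (n : ℂ) * Cc ϑ * rL f L ϑ φ = _
  rw [h1, h2]
  have h3 : -(Complex.I * Sc ϑ) * rL f (L.map phN) ϑ φ = rL f (L.map phTd) ϑ φ := by
    have h3' := rL_scale (f := f) (ϑ := ϑ) (φ := φ) (c := -(Complex.I * Sc ϑ)) (g := phBd)
      (fun t => scale_phBd t) (L.map phN)
    rw [List.map_map, phBd_phN] at h3'
    exact h3'
  have h4 : (n : ℂ) * Cc ϑ * rL f L ϑ φ = rL f (L.map (cT n)) ϑ φ :=
    rL_scale (f := f) (ϑ := ϑ) (φ := φ) (c := (n : ℂ) * Cc ϑ) (g := cT n)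
      (fun t => scale_cT n t) L
  rw [sub_eq_add_neg, ← neg_mul, h3, h4, ldF, rL_append, rL_append]

-- locality
lemma Lo_congr {g h : F2} (he : ∀ x ∈ Set.Ioo 0 Real.pi, ∀ y, g x y = h x y)
    (hϑ : ϑ ∈ Set.Ioo 0 Real.pi) (n : ℤ) : Lo n g ϑ φ = Lo n h ϑ φ := by
  show dTh g ϑ φ + Complex.I * (Real.sin ϑ : ℂ)⁻¹ * dPh g ϑ φ
      + (n : ℂ) * ((Real.cos ϑ / Real.sin ϑ : ℝ) : ℂ) * g ϑ φ = _
  rw [dTh_congr he hϑ, dPh_congr he hϑ, he ϑ hϑ φ]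
  rfl

lemma Ld_congr {g h : F2} (he : ∀ x ∈ Set.Ioo 0 Real.pi, ∀ y, g x y = h x y)
    (hϑ : ϑ ∈ Set.Ioo 0 Real.pi) (n : ℤ) : Ld n g ϑ φ = Ld n h ϑ φ := by
  show dTh g ϑ φ - Complex.I * (Real.sin ϑ : ℂ)⁻¹ * dPh g ϑ φ
      + (n : ℂ) * ((Real.cos ϑ / Real.sin ϑ : ℝ) : ℂ) * g ϑ φ = _
  rw [dTh_congr he hϑ, dPh_congr he hϑ, he ϑ hϑ φ]
  rfl

-- glue steps
lemma step_lo (hf : Smooth2 f) {g : F2} {L M : List Tm} (n : ℤ)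
    (hg : ∀ x ∈ Set.Ioo 0 Real.pi, ∀ y, g x y = rL f L x y)
    (hM : ∀ x ∈ Set.Ioo 0 Real.pi, ∀ y, rL f (loF n L) x y = rL f M x y) :
    ∀ x ∈ Set.Ioo 0 Real.pi, ∀ y, Lo n g x y = rL f M x y := by
  intro x hx y
  rw [Lo_congr hg hx n, lo_realize hf hx n L, hM x hx y]

lemma step_ld (hf : Smooth2 f) {g : F2} {L M : List Tm} (n : ℤ)
    (hg : ∀ x ∈ Set.Ioo 0 Real.pi, ∀ y, g x y = rL f L x y)
    (hM : ∀ x ∈ Set.Ioo 0 Real.pi, ∀ y, rL f (ldF n L) x y = rL f M x y) :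
    ∀ x ∈ Set.Ioo 0 Real.pi, ∀ y, Ld n g x y = rL f M x y := by
  intro x hx y
  rw [Ld_congr hg hx n, ld_realize hf hx n L, hM x hx y]

lemma step_sub {g h : F2} {L M N : List Tm}
    (hg : ∀ x ∈ Set.Ioo 0 Real.pi, ∀ y, g x y = rL f L x y)
    (hh : ∀ x ∈ Set.Ioo 0 Real.pi, ∀ y, h x y = rL f M x y)
    (hN : ∀ x ∈ Set.Ioo 0 Real.pi, ∀ y, rL f (L ++ M.map (smT (-2))) x y = rL f N x y) :
    ∀ x ∈ Set.Ioo 0 Real.pi, ∀ y, g x y - 2 * h x y = rL f N x y := by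
  intro x hx y
  rw [hg x hx y, hh x hx y, ← hN x hx y, rL_append]
  have h2 : ((-2 : ℤ) : ℂ) * rL f M x y = rL f (M.map (smT (-2))) x y :=
    rL_scale (fun t => scale_smT (-2) t) M
  push_cast at h2
  linear_combination h2

-- the relation cot² = csc² − 1
lemma Cc_sq (h : ϑ ∈ Set.Ioo 0 Real.pi) : Cc ϑ ^ 2 = Sc ϑ ^ 2 - 1 := by
  have hs := sin_ne h
  have hr : (Real.cos ϑ / Real.sin ϑ) ^ 2 = ((Real.sin ϑ)⁻¹) ^ 2 - 1 := by
    rw [div_pow, inv_pow, inv_eq_one_div, div_sub' (pow_ne_zero 2 hs),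
      div_eq_div_iff (pow_ne_zero 2 hs) (pow_ne_zero 2 hs)]
    linear_combination (Real.sin ϑ) ^ 2 * Real.sin_sq_add_cos_sq ϑ
  have hcc := congrArg (fun r : ℝ => (r : ℂ)) hr
  simp only [Cc, Sc]
  push_cast at hcc ⊢
  linear_combination hcc


def T0 : List Tm :=
  [(0, 0, 0, 0, 1, 0)]

def T1 : List Tm :=
  [(0, 0, 1, 0, 2, 0),
   (0, 1, 0, 1, 0, 1),
   (1, 0, 0, 0, 1, 0)]

def T2 : List Tm :=
  [(0, 0, 0, 0, -2, 0),
   (0, 1, 1, 1, 0, 2),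
   (0, 2, 0, 2, -1, 0),
   (1, 0, 1, 0, 3, 0),
   (1, 1, 0, 1, 0, 2),
   (2, 0, 0, 0, 1, 0)]

def T3 : List Tm :=
  [(0, 1, 0, 3, 0, -4),
   (0, 3, 0, 3, 0, -1),
   (1, 0, 0, 0, -2, 0),
   (1, 0, 0, 2, -3, 0),
   (1, 1, 1, 1, 0, 3),
   (1, 2, 0, 2, -3, 0),
   (2, 0, 1, 0, 3, 0),
   (2, 1, 0, 1, 0, 3),
   (3, 0, 0, 0, 1, 0)]

def T4 : List Tm :=
  [(0, 1, 1, 3, 0, 16),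
   (0, 2, 0, 4, 4, 0),
   (0, 3, 1, 3, 0, 4),
   (0, 4, 0, 4, 1, 0),
   (1, 0, 1, 0, 2, 0),
   (1, 0, 1, 2, 9, 0),
   (1, 1, 0, 1, 0, 4),
   (1, 1, 0, 3, 0, -16),
   (1, 2, 1, 2, 6, 0),
   (1, 3, 0, 3, 0, -4),
   (2, 0, 0, 0, 1, 0),
   (2, 0, 0, 2, -9, 0),
   (2, 2, 0, 2, -6, 0),
   (3, 0, 1, 0, 2, 0),
   (3, 1, 0, 1, 0, 4),
   (4, 0, 0, 0, 1, 0)]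

def T5 : List Tm :=
  [(0, 1, 0, 3, 0, 16),
   (0, 1, 0, 5, 0, -32),
   (0, 2, 1, 4, 8, 0),
   (0, 3, 0, 3, 0, 4),
   (0, 3, 0, 5, 0, -12),
   (0, 4, 1, 4, 2, 0),
   (0, 5, 0, 5, 0, -1),
   (1, 0, 0, 0, -4, 0),
   (1, 0, 0, 2, 2, 0),
   (1, 0, 0, 4, -9, 0),
   (1, 1, 1, 1, 0, 2),
   (1, 1, 1, 3, 0, 23),
   (1, 2, 0, 2, 4, 0),
   (1, 2, 0, 4, -18, 0),
   (1, 3, 1, 3, 0, 2),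
   (1, 4, 0, 4, -3, 0),
   (2, 0, 1, 0, 4, 0),
   (2, 0, 1, 2, 9, 0),
   (2, 1, 0, 1, 0, 3),
   (2, 1, 0, 3, 0, -7),
   (2, 2, 1, 2, 6, 0),
   (2, 3, 0, 3, 0, 2),
   (3, 0, 0, 0, -3, 0),
   (3, 0, 0, 2, -7, 0),
   (3, 1, 1, 1, 0, 2),
   (3, 2, 0, 2, -2, 0),
   (4, 0, 1, 0, 4, 0),
   (4, 1, 0, 1, 0, 3),
   (5, 0, 0, 0, 1, 0)]

def T6 : List Tm :=
  [(0, 1, 1, 3, 0, -32),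
   (0, 1, 1, 5, 0, 128),
   (0, 2, 0, 4, 40, 0),
   (0, 2, 0, 6, -64, 0),
   (0, 3, 1, 3, 0, -8),
   (0, 3, 1, 5, 0, 40),
   (0, 4, 0, 4, 10, 0),
   (0, 4, 0, 6, -20, 0),
   (0, 5, 1, 5, 0, 2),
   (0, 6, 0, 6, -1, 0),
   (1, 0, 1, 0, -4, 0),
   (1, 0, 1, 2, -2, 0),
   (1, 0, 1, 4, 27, 0),
   (1, 1, 0, 1, 0, 4),
   (1, 1, 0, 3, 0, 58),
   (1, 1, 0, 5, 0, -92),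
   (1, 2, 1, 2, -2, 0),
   (1, 2, 1, 4, 85, 0),
   (1, 3, 0, 3, 0, 4),
   (1, 4, 1, 4, 13, 0),
   (1, 5, 0, 5, 0, 2),
   (2, 0, 0, 0, -8, 0),
   (2, 0, 0, 2, 11, 0),
   (2, 0, 0, 4, -27, 0),
   (2, 1, 1, 1, 0, -2),
   (2, 1, 1, 3, 0, 28),
   (2, 2, 0, 2, 13, 0),
   (2, 2, 0, 4, -37, 0),
   (2, 3, 1, 3, 0, -8),
   (2, 4, 0, 4, -1, 0),
   (3, 0, 1, 0, 1, 0),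
   (3, 0, 1, 2, 16, 0),
   (3, 1, 0, 1, 0, 6),
   (3, 1, 0, 3, 0, -2),
   (3, 2, 1, 2, 10, 0),
   (3, 3, 0, 3, 0, 4),
   (4, 0, 0, 0, -7, 0),
   (4, 0, 0, 2, -7, 0),
   (4, 1, 1, 1, 0, -2),
   (4, 2, 0, 2, 1, 0),
   (5, 0, 1, 0, 5, 0),
   (5, 1, 0, 1, 0, 2),
   (6, 0, 0, 0, 1, 0)]

def T7 : List Tm :=
  [(0, 1, 0, 3, 0, -96),
   (0, 1, 0, 5, 0, 768),
   (0, 1, 0, 7, 0, -768),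
   (0, 2, 1, 4, -192, 0),
   (0, 2, 1, 6, 512, 0),
   (0, 3, 0, 3, 0, -24),
   (0, 3, 0, 5, 0, 192),
   (0, 3, 0, 7, 0, -176),
   (0, 4, 1, 4, -48, 0),
   (0, 4, 1, 6, 160, 0),
   (0, 5, 0, 7, 0, 8),
   (0, 6, 1, 6, 8, 0),
   (0, 7, 0, 7, 0, 1),
   (1, 0, 0, 4, 114, 0),
   (1, 0, 0, 6, -135, 0),
   (1, 1, 1, 3, 0, -204),
   (1, 1, 1, 5, 0, 561),
   (1, 2, 0, 4, 444, 0),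
   (1, 2, 0, 6, -581, 0),
   (1, 3, 1, 3, 0, -18),
   (1, 3, 1, 5, 0, -45),
   (1, 4, 0, 4, 66, 0),
   (1, 4, 0, 6, -85, 0),
   (1, 5, 1, 5, 0, -21),
   (1, 6, 0, 6, 1, 0),
   (2, 0, 1, 0, -4, 0),
   (2, 0, 1, 2, -24, 0),
   (2, 0, 1, 4, 135, 0),
   (2, 1, 0, 1, 0, 10),
   (2, 1, 0, 3, 0, 135),
   (2, 1, 0, 5, 0, -177),
   (2, 2, 1, 2, -30, 0),
   (2, 2, 1, 4, 261, 0),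
   (2, 3, 0, 3, 0, -33),
   (2, 3, 0, 5, 0, 69),
   (2, 4, 1, 4, 9, 0),
   (2, 5, 0, 5, 0, 3),
   (3, 0, 0, 0, -8, 0),
   (3, 0, 0, 2, 42, 0),
   (3, 0, 0, 4, -75, 0),
   (3, 1, 1, 1, 0, -9),
   (3, 1, 1, 3, 0, 18),
   (3, 2, 0, 2, 39, 0),
   (3, 2, 0, 4, -69, 0),
   (3, 3, 1, 3, 0, -30),
   (3, 4, 0, 4, 3, 0),
   (4, 0, 1, 0, 1, 0),
   (4, 0, 1, 2, 30, 0),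
   (4, 1, 0, 1, 0, 11),
   (4, 1, 0, 3, 0, 9),
   (4, 2, 1, 2, 6, 0),
   (4, 3, 0, 3, 0, 3),
   (5, 0, 0, 0, -7, 0),
   (5, 0, 0, 2, -12, 0),
   (5, 1, 1, 1, 0, -9),
   (5, 2, 0, 2, 3, 0),
   (6, 0, 1, 0, 5, 0),
   (6, 1, 0, 1, 0, 1),
   (7, 0, 0, 0, 1, 0)]

def T8 : List Tm :=
  [(0, 1, 1, 3, 0, 384),
   (0, 1, 1, 5, 0, -4608),
   (0, 1, 1, 7, 0, 6144),
   (0, 2, 0, 4, -1056, 0),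
   (0, 2, 0, 6, 5504, 0),
   (0, 2, 0, 8, -4864, 0),
   (0, 3, 1, 3, 0, 96),
   (0, 3, 1, 5, 0, -960),
   (0, 3, 1, 7, 0, 896),
   (0, 4, 0, 4, -264, 0),
   (0, 4, 0, 6, 1600, 0),
   (0, 4, 0, 8, -1456, 0),
   (0, 5, 1, 5, 0, 48),
   (0, 5, 1, 7, 0, -224),
   (0, 6, 0, 6, 56, 0),
   (0, 6, 0, 8, -56, 0),
   (0, 7, 1, 7, 0, -16),
   (0, 8, 0, 8, 1, 0),
   (1, 0, 1, 4, -570, 0),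
   (1, 0, 1, 6, 945, 0),
   (1, 1, 0, 3, 0, -912),
   (1, 1, 0, 5, 0, 5040),
   (1, 1, 0, 7, 0, -4560),
   (1, 2, 1, 4, -2616, 0),
   (1, 2, 1, 6, 5140, 0),
   (1, 3, 0, 3, 0, -96),
   (1, 3, 0, 5, 0, -432),
   (1, 3, 0, 7, 0, 720),
   (1, 4, 1, 4, -396, 0),
   (1, 4, 1, 6, 710, 0),
   (1, 5, 0, 5, 0, -192),
   (1, 5, 0, 7, 0, 240),
   (1, 6, 1, 6, -20, 0),
   (2, 0, 0, 0, -4, 0),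
   (2, 0, 0, 2, -64, 0),
   (2, 0, 0, 4, 885, 0),
   (2, 0, 0, 6, -945, 0),
   (2, 1, 1, 1, 0, -16),
   (2, 1, 1, 3, 0, -720),
   (2, 1, 1, 5, 0, 1488),
   (2, 2, 0, 2, -80, 0),
   (2, 2, 0, 4, 2004, 0),
   (2, 2, 0, 6, -2324, 0),
   (2, 3, 1, 3, 0, 144),
   (2, 3, 1, 5, 0, -720),
   (2, 4, 0, 4, 78, 0),
   (2, 4, 0, 6, -70, 0),
   (2, 5, 1, 5, 0, -48),
   (2, 6, 0, 6, 4, 0),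
   (3, 0, 1, 0, 4, 0),
   (3, 0, 1, 2, -150, 0),
   (3, 0, 1, 4, 510, 0),
   (3, 1, 0, 3, 0, 192),
   (3, 1, 0, 5, 0, -192),
   (3, 2, 1, 2, -156, 0),
   (3, 2, 1, 4, 624, 0),
   (3, 3, 0, 3, 0, -192),
   (3, 3, 0, 5, 0, 288),
   (3, 4, 1, 4, -36, 0),
   (4, 0, 0, 0, -7, 0),
   (4, 0, 0, 2, 130, 0),
   (4, 0, 0, 4, -195, 0),
   (4, 1, 1, 1, 0, -32),
   (4, 1, 1, 3, 0, -48),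
   (4, 2, 0, 2, 68, 0),
   (4, 2, 0, 4, -84, 0),
   (4, 3, 1, 3, 0, -48),
   (4, 4, 0, 4, 6, 0),
   (5, 0, 1, 0, 8, 0),
   (5, 0, 1, 2, 66, 0),
   (5, 1, 0, 3, 0, 48),
   (5, 2, 1, 2, -12, 0),
   (6, 0, 0, 0, -2, 0),
   (6, 0, 0, 2, -22, 0),
   (6, 1, 1, 1, 0, -16),
   (6, 2, 0, 2, 4, 0),
   (7, 0, 1, 0, 4, 0),
   (8, 0, 0, 0, 1, 0)]

def A2 : List Tm :=
  [(0, 0, 0, 0, 2, 0),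
   (0, 0, 0, 2, -4, 0),
   (0, 1, 1, 1, 0, -4),
   (0, 2, 0, 2, 1, 0),
   (1, 0, 1, 0, 1, 0),
   (2, 0, 0, 0, 1, 0)]

def A3 : List Tm :=
  [(0, 0, 0, 2, -4, 0),
   (0, 1, 1, 1, 0, -4),
   (0, 2, 0, 2, 1, 0),
   (1, 0, 1, 0, 1, 0),
   (2, 0, 0, 0, 1, 0)]

def A4 : List Tm :=
  [(0, 1, 0, 1, 0, 4),
   (0, 1, 0, 3, 0, -4),
   (0, 2, 1, 2, 4, 0),
   (0, 3, 0, 3, 0, 1),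
   (1, 0, 0, 0, -2, 0),
   (1, 0, 0, 2, -3, 0),
   (1, 1, 1, 1, 0, -3),
   (1, 2, 0, 2, 1, 0),
   (2, 0, 1, 0, 3, 0),
   (2, 1, 0, 1, 0, 1),
   (3, 0, 0, 0, 1, 0)]

def A5 : List Tm :=
  [(0, 1, 1, 1, 0, -8),
   (0, 1, 1, 3, 0, 16),
   (0, 2, 0, 2, 16, 0),
   (0, 2, 0, 4, -20, 0),
   (0, 3, 1, 3, 0, -8),
   (0, 4, 0, 4, 1, 0),
   (1, 0, 1, 0, 2, 0),
   (1, 0, 1, 2, 9, 0),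
   (1, 1, 0, 3, 0, 8),
   (1, 2, 1, 2, -2, 0),
   (2, 0, 0, 0, 1, 0),
   (2, 0, 0, 2, -9, 0),
   (2, 1, 1, 1, 0, -8),
   (2, 2, 0, 2, 2, 0),
   (3, 0, 1, 0, 2, 0),
   (4, 0, 0, 0, 1, 0)]

def A6 : List Tm :=
  [(0, 0, 0, 2, 8, 0),
   (0, 1, 1, 3, 0, 16),
   (0, 2, 0, 2, 14, 0),
   (0, 2, 0, 4, -20, 0),
   (0, 3, 1, 3, 0, -8),
   (0, 4, 0, 4, 1, 0),
   (1, 0, 1, 2, 9, 0),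
   (1, 1, 0, 3, 0, 8),
   (1, 2, 1, 2, -2, 0),
   (2, 0, 0, 0, -1, 0),
   (2, 0, 0, 2, -9, 0),
   (2, 1, 1, 1, 0, -8),
   (2, 2, 0, 2, 2, 0),
   (3, 0, 1, 0, 2, 0),
   (4, 0, 0, 0, 1, 0)]

def A7 : List Tm :=
  [(0, 1, 0, 3, 0, 24),
   (0, 1, 0, 5, 0, -32),
   (0, 2, 1, 4, 24, 0),
   (0, 3, 0, 3, 0, 6),
   (0, 3, 0, 5, 0, -4),
   (0, 4, 1, 4, 6, 0),
   (0, 5, 0, 5, 0, 1),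
   (1, 0, 0, 2, 8, 0),
   (1, 0, 0, 4, -9, 0),
   (1, 1, 1, 3, 0, 17),
   (1, 2, 0, 2, 14, 0),
   (1, 2, 0, 4, -26, 0),
   (1, 3, 1, 3, 0, -10),
   (1, 4, 0, 4, 1, 0),
   (2, 0, 1, 0, -2, 0),
   (2, 0, 1, 2, 9, 0),
   (2, 1, 0, 1, 0, 7),
   (2, 1, 0, 3, 0, -1),
   (2, 2, 1, 2, 6, 0),
   (2, 3, 0, 3, 0, 2),
   (3, 0, 0, 0, -5, 0),
   (3, 0, 0, 2, -7, 0),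
   (3, 1, 1, 1, 0, -6),
   (3, 2, 0, 2, 2, 0),
   (4, 0, 1, 0, 4, 0),
   (4, 1, 0, 1, 0, 1),
   (5, 0, 0, 0, 1, 0)]

def A8 : List Tm :=
  [(0, 1, 1, 3, 0, -96),
   (0, 1, 1, 5, 0, 192),
   (0, 2, 0, 4, 144, 0),
   (0, 2, 0, 6, -176, 0),
   (0, 3, 1, 3, 0, -24),
   (0, 4, 0, 4, 36, 0),
   (0, 4, 0, 6, -40, 0),
   (0, 5, 1, 5, 0, -12),
   (0, 6, 0, 6, 1, 0),
   (1, 0, 1, 2, -24, 0),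
   (1, 0, 1, 4, 45, 0),
   (1, 1, 0, 3, 0, 84),
   (1, 1, 0, 5, 0, -108),
   (1, 2, 1, 2, -42, 0),
   (1, 2, 1, 4, 171, 0),
   (1, 3, 0, 3, 0, -48),
   (1, 3, 0, 5, 0, 72),
   (1, 4, 1, 4, -9, 0),
   (2, 0, 0, 0, -2, 0),
   (2, 0, 0, 2, 39, 0),
   (2, 0, 0, 4, -45, 0),
   (2, 1, 1, 1, 0, -12),
   (2, 1, 1, 3, 0, 12),
   (2, 2, 0, 2, 39, 0),
   (2, 2, 0, 4, -51, 0),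
   (2, 3, 1, 3, 0, -24),
   (2, 4, 0, 4, 3, 0),
   (3, 0, 1, 0, 3, 0),
   (3, 0, 1, 2, 30, 0),
   (3, 1, 0, 3, 0, 24),
   (3, 2, 1, 2, -6, 0),
   (4, 0, 0, 0, -1, 0),
   (4, 0, 0, 2, -15, 0),
   (4, 1, 1, 1, 0, -12),
   (4, 2, 0, 2, 3, 0),
   (5, 0, 1, 0, 3, 0),
   (6, 0, 0, 0, 1, 0)]

def A9 : List Tm :=
  [(0, 1, 0, 3, 0, -96),
   (0, 1, 0, 5, 0, 768),
   (0, 1, 0, 7, 0, -768),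
   (0, 2, 1, 4, -192, 0),
   (0, 2, 1, 6, 512, 0),
   (0, 3, 0, 3, 0, -24),
   (0, 3, 0, 5, 0, 192),
   (0, 3, 0, 7, 0, -176),
   (0, 4, 1, 4, -48, 0),
   (0, 4, 1, 6, 160, 0),
   (0, 5, 0, 7, 0, 8),
   (0, 6, 1, 6, 8, 0),
   (0, 7, 0, 7, 0, 1),
   (1, 0, 0, 4, 114, 0),
   (1, 0, 0, 6, -135, 0),
   (1, 1, 1, 3, 0, -204),
   (1, 1, 1, 5, 0, 561),
   (1, 2, 0, 4, 444, 0),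
   (1, 2, 0, 6, -581, 0),
   (1, 3, 1, 3, 0, -18),
   (1, 3, 1, 5, 0, -45),
   (1, 4, 0, 4, 66, 0),
   (1, 4, 0, 6, -85, 0),
   (1, 5, 1, 5, 0, -21),
   (1, 6, 0, 6, 1, 0),
   (2, 0, 1, 0, -4, 0),
   (2, 0, 1, 2, -24, 0),
   (2, 0, 1, 4, 135, 0),
   (2, 1, 0, 1, 0, 10),
   (2, 1, 0, 3, 0, 135),
   (2, 1, 0, 5, 0, -177),
   (2, 2, 1, 2, -30, 0),
   (2, 2, 1, 4, 261, 0),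
   (2, 3, 0, 3, 0, -33),
   (2, 3, 0, 5, 0, 69),
   (2, 4, 1, 4, 9, 0),
   (2, 5, 0, 5, 0, 3),
   (3, 0, 0, 0, -8, 0),
   (3, 0, 0, 2, 42, 0),
   (3, 0, 0, 4, -75, 0),
   (3, 1, 1, 1, 0, -9),
   (3, 1, 1, 3, 0, 18),
   (3, 2, 0, 2, 39, 0),
   (3, 2, 0, 4, -69, 0),
   (3, 3, 1, 3, 0, -30),
   (3, 4, 0, 4, 3, 0),
   (4, 0, 1, 0, 1, 0),
   (4, 0, 1, 2, 30, 0),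
   (4, 1, 0, 1, 0, 11),
   (4, 1, 0, 3, 0, 9),
   (4, 2, 1, 2, 6, 0),
   (4, 3, 0, 3, 0, 3),
   (5, 0, 0, 0, -7, 0),
   (5, 0, 0, 2, -12, 0),
   (5, 1, 1, 1, 0, -9),
   (5, 2, 0, 2, 3, 0),
   (6, 0, 1, 0, 5, 0),
   (6, 1, 0, 1, 0, 1),
   (7, 0, 0, 0, 1, 0)]

def A10 : List Tm :=
  [(0, 1, 1, 3, 0, 384),
   (0, 1, 1, 5, 0, -4608),
   (0, 1, 1, 7, 0, 6144),
   (0, 2, 0, 4, -1056, 0),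
   (0, 2, 0, 6, 5504, 0),
   (0, 2, 0, 8, -4864, 0),
   (0, 3, 1, 3, 0, 96),
   (0, 3, 1, 5, 0, -960),
   (0, 3, 1, 7, 0, 896),
   (0, 4, 0, 4, -264, 0),
   (0, 4, 0, 6, 1600, 0),
   (0, 4, 0, 8, -1456, 0),
   (0, 5, 1, 5, 0, 48),
   (0, 5, 1, 7, 0, -224),
   (0, 6, 0, 6, 56, 0),
   (0, 6, 0, 8, -56, 0),
   (0, 7, 1, 7, 0, -16),
   (0, 8, 0, 8, 1, 0),
   (1, 0, 1, 4, -570, 0),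
   (1, 0, 1, 6, 945, 0),
   (1, 1, 0, 3, 0, -912),
   (1, 1, 0, 5, 0, 5040),
   (1, 1, 0, 7, 0, -4560),
   (1, 2, 1, 4, -2616, 0),
   (1, 2, 1, 6, 5140, 0),
   (1, 3, 0, 3, 0, -96),
   (1, 3, 0, 5, 0, -432),
   (1, 3, 0, 7, 0, 720),
   (1, 4, 1, 4, -396, 0),
   (1, 4, 1, 6, 710, 0),
   (1, 5, 0, 5, 0, -192),
   (1, 5, 0, 7, 0, 240),
   (1, 6, 1, 6, -20, 0),
   (2, 0, 0, 0, -4, 0),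
   (2, 0, 0, 2, -64, 0),
   (2, 0, 0, 4, 885, 0),
   (2, 0, 0, 6, -945, 0),
   (2, 1, 1, 1, 0, -16),
   (2, 1, 1, 3, 0, -720),
   (2, 1, 1, 5, 0, 1488),
   (2, 2, 0, 2, -80, 0),
   (2, 2, 0, 4, 2004, 0),
   (2, 2, 0, 6, -2324, 0),
   (2, 3, 1, 3, 0, 144),
   (2, 3, 1, 5, 0, -720),
   (2, 4, 0, 4, 78, 0),
   (2, 4, 0, 6, -70, 0),
   (2, 5, 1, 5, 0, -48),
   (2, 6, 0, 6, 4, 0),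
   (3, 0, 1, 0, 4, 0),
   (3, 0, 1, 2, -150, 0),
   (3, 0, 1, 4, 510, 0),
   (3, 1, 0, 3, 0, 192),
   (3, 1, 0, 5, 0, -192),
   (3, 2, 1, 2, -156, 0),
   (3, 2, 1, 4, 624, 0),
   (3, 3, 0, 3, 0, -192),
   (3, 3, 0, 5, 0, 288),
   (3, 4, 1, 4, -36, 0),
   (4, 0, 0, 0, -7, 0),
   (4, 0, 0, 2, 130, 0),
   (4, 0, 0, 4, -195, 0),
   (4, 1, 1, 1, 0, -32),
   (4, 1, 1, 3, 0, -48),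
   (4, 2, 0, 2, 68, 0),
   (4, 2, 0, 4, -84, 0),
   (4, 3, 1, 3, 0, -48),
   (4, 4, 0, 4, 6, 0),
   (5, 0, 1, 0, 8, 0),
   (5, 0, 1, 2, 66, 0),
   (5, 1, 0, 3, 0, 48),
   (5, 2, 1, 2, -12, 0),
   (6, 0, 0, 0, -2, 0),
   (6, 0, 0, 2, -22, 0),
   (6, 1, 1, 1, 0, -16),
   (6, 2, 0, 2, 4, 0),
   (7, 0, 1, 0, 4, 0),
   (8, 0, 0, 0, 1, 0)]

lemma hcT1 (f : F2) : ∀ x ∈ Set.Ioo (0:ℝ) Real.pi, ∀ y : ℝ,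
    rL f (loF 2 T0) x y = rL f T1 x y := by
  intro x hx y
  have hrel := Cc_sq hx
  simp only [T0, T1, loF, ldF, dThT, phT, phTd, cT, smT, List.flatMap_cons, List.flatMap_nil, List.map_cons, List.map_nil, List.cons_append, List.nil_append, List.append_nil, rL, rT, List.sum_cons, List.sum_nil, Nat.reduceAdd, Nat.reduceSub, Int.reduceNeg]
  push_cast
  ring

lemma hcT2 (f : F2) : ∀ x ∈ Set.Ioo (0:ℝ) Real.pi, ∀ y : ℝ,
    rL f (loF 1 T1) x y = rL f T2 x y := by
  intro x hx y
  have hrel := Cc_sq hx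
  simp only [T1, T2, loF, ldF, dThT, phT, phTd, cT, smT, List.flatMap_cons, List.flatMap_nil, List.map_cons, List.map_nil, List.cons_append, List.nil_append, List.append_nil, rL, rT, List.sum_cons, List.sum_nil, Nat.reduceAdd, Nat.reduceSub, Int.reduceNeg]
  push_cast
  linear_combination (((2 : ℂ) + (0 : ℂ) * Complex.I) * Sc x ^ 0 * D 0 0 f x y) * Cc_sq hx

lemma hcT3 (f : F2) : ∀ x ∈ Set.Ioo (0:ℝ) Real.pi, ∀ y : ℝ,
    rL f (loF 0 T2) x y = rL f T3 x y := by
  intro x hx y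
  have hrel := Cc_sq hx
  simp only [T2, T3, loF, ldF, dThT, phT, phTd, cT, smT, List.flatMap_cons, List.flatMap_nil, List.map_cons, List.map_nil, List.cons_append, List.nil_append, List.append_nil, rL, rT, List.sum_cons, List.sum_nil, Nat.reduceAdd, Nat.reduceSub, Int.reduceNeg]
  push_cast
  linear_combination (((0 : ℂ) + (-2 : ℂ) * Complex.I) * Sc x ^ 1 * D 0 1 f x y) * Cc_sq hx

lemma hcT4 (f : F2) : ∀ x ∈ Set.Ioo (0:ℝ) Real.pi, ∀ y : ℝ,
    rL f (loF (-1) T3) x y = rL f T4 x y := by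
  intro x hx y
  have hrel := Cc_sq hx
  simp only [T3, T4, loF, ldF, dThT, phT, phTd, cT, smT, List.flatMap_cons, List.flatMap_nil, List.map_cons, List.map_nil, List.cons_append, List.nil_append, List.append_nil, rL, rT, List.sum_cons, List.sum_nil, Nat.reduceAdd, Nat.reduceSub, Int.reduceNeg]
  push_cast
  linear_combination (((0 : ℂ) + (-6 : ℂ) * Complex.I) * Sc x ^ 1 * D 1 1 f x y + ((-3 : ℂ) + (0 : ℂ) * Complex.I) * Sc x ^ 0 * D 2 0 f x y) * Cc_sq hx

lemma hcT5 (f : F2) : ∀ x ∈ Set.Ioo (0:ℝ) Real.pi, ∀ y : ℝ,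
    rL f (ldF 2 T4) x y = rL f T5 x y := by
  intro x hx y
  have hrel := Cc_sq hx
  simp only [T4, T5, loF, ldF, dThT, phT, phTd, cT, smT, List.flatMap_cons, List.flatMap_nil, List.map_cons, List.map_nil, List.cons_append, List.nil_append, List.append_nil, rL, rT, List.sum_cons, List.sum_nil, Nat.reduceAdd, Nat.reduceSub, Int.reduceNeg]
  push_cast
  linear_combination (((0 : ℂ) + (-16 : ℂ) * Complex.I) * Sc x ^ 3 * D 0 1 f x y + ((0 : ℂ) + (-4 : ℂ) * Complex.I) * Sc x ^ 3 * D 0 3 f x y + ((4 : ℂ) + (0 : ℂ) * Complex.I) * Sc x ^ 0 * D 1 0 f x y + ((4 : ℂ) + (0 : ℂ) * Complex.I) * Sc x ^ 0 * D 3 0 f x y) * Cc_sq hx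

lemma hcT6 (f : F2) : ∀ x ∈ Set.Ioo (0:ℝ) Real.pi, ∀ y : ℝ,
    rL f (ldF 1 T5) x y = rL f T6 x y := by
  intro x hx y
  have hrel := Cc_sq hx
  simp only [T5, T6, loF, ldF, dThT, phT, phTd, cT, smT, List.flatMap_cons, List.flatMap_nil, List.map_cons, List.map_nil, List.cons_append, List.nil_append, List.append_nil, rL, rT, List.sum_cons, List.sum_nil, Nat.reduceAdd, Nat.reduceSub, Int.reduceNeg]
  push_cast
  linear_combination (((-24 : ℂ) + (0 : ℂ) * Complex.I) * Sc x ^ 4 * D 0 2 f x y + ((-6 : ℂ) + (0 : ℂ) * Complex.I) * Sc x ^ 4 * D 0 4 f x y + ((0 : ℂ) + (-46 : ℂ) * Complex.I) * Sc x ^ 3 * D 1 1 f x y + ((0 : ℂ) + (-4 : ℂ) * Complex.I) * Sc x ^ 3 * D 1 3 f x y + ((4 : ℂ) + (0 : ℂ) * Complex.I) * Sc x ^ 0 * D 2 0 f x y + ((-9 : ℂ) + (0 : ℂ) * Complex.I) * Sc x ^ 2 * D 2 0 f x y + ((-6 : ℂ) + (0 : ℂ) * Complex.I) * Sc x ^ 2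 * D 2 2 f x y + ((4 : ℂ) + (0 : ℂ) * Complex.I) * Sc x ^ 0 * D 4 0 f x y) * Cc_sq hx

lemma hcT7 (f : F2) : ∀ x ∈ Set.Ioo (0:ℝ) Real.pi, ∀ y : ℝ,
    rL f (ldF 0 T6) x y = rL f T7 x y := by
  intro x hx y
  have hrel := Cc_sq hx
  simp only [T6, T7, loF, ldF, dThT, phT, phTd, cT, smT, List.flatMap_cons, List.flatMap_nil, List.map_cons, List.map_nil, List.cons_append, List.nil_append, List.append_nil, rL, rT, List.sum_cons, List.sum_nil, Nat.reduceAdd, Nat.reduceSub, Int.reduceNeg]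
  push_cast
  linear_combination (((0 : ℂ) + (96 : ℂ) * Complex.I) * Sc x ^ 3 * D 0 1 f x y + ((0 : ℂ) + (-640 : ℂ) * Complex.I) * Sc x ^ 5 * D 0 1 f x y + ((0 : ℂ) + (24 : ℂ) * Complex.I) * Sc x ^ 3 * D 0 3 f x y + ((0 : ℂ) + (-200 : ℂ) * Complex.I) * Sc x ^ 5 * D 0 3 f x y + ((0 : ℂ) + (-10 : ℂ) * Complex.I) * Sc x ^ 5 * D 0 5 f x y + ((4 : ℂ) + (0 : ℂ) * Complex.I) * Sc x ^ 2 * D 1 0 f x y + ((-108 : ℂ) + (0 : ℂ) * Complex.I) * Sc x ^ 4 * D 1 0 f x y + ((4 : ℂ) + (0 : ℂ) * Complex.I) * Sc x ^ 2 * D 1 2 f x y + ((-340 : ℂ) + (0 : ℂ) * Complex.I) * Sc x ^ 4 * D 1 2 f x y + ((-52 : ℂ) + (0 : ℂ) * Complex.I) * Sc x ^ 4 * D 1 4 f x y + ((0 : ℂ) + (2 : ℂ) * Complex.I) * Sc x ^ 1 * D 2 1 f x y + ((0 : ℂ) + (-84 : ℂ) * Complex.I) * Sc x ^ 3 * D 2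 1 f x y + ((0 : ℂ) + (24 : ℂ) * Complex.I) * Sc x ^ 3 * D 2 3 f x y + ((-32 : ℂ) + (0 : ℂ) * Complex.I) * Sc x ^ 2 * D 3 0 f x y + ((-20 : ℂ) + (0 : ℂ) * Complex.I) * Sc x ^ 2 * D 3 2 f x y + ((0 : ℂ) + (2 : ℂ) * Complex.I) * Sc x ^ 1 * D 4 1 f x y) * Cc_sq hx

lemma hcT8 (f : F2) : ∀ x ∈ Set.Ioo (0:ℝ) Real.pi, ∀ y : ℝ,
    rL f (ldF (-1) T7) x y = rL f T8 x y := by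
  intro x hx y
  have hrel := Cc_sq hx
  simp only [T7, T8, loF, ldF, dThT, phT, phTd, cT, smT, List.flatMap_cons, List.flatMap_nil, List.map_cons, List.map_nil, List.cons_append, List.nil_append, List.append_nil, rL, rT, List.sum_cons, List.sum_nil, Nat.reduceAdd, Nat.reduceSub, Int.reduceNeg]
  push_cast
  linear_combination (((960 : ℂ) + (0 : ℂ) * Complex.I) * Sc x ^ 4 * D 0 2 f x y + ((-3584 : ℂ) + (0 : ℂ) * Complex.I) * Sc x ^ 6 * D 0 2 f x y + ((240 : ℂ) + (0 : ℂ) * Complex.I) * Sc x ^ 4 * D 0 4 f x y + ((-1120 : ℂ) + (0 : ℂ) * Complex.I) * Sc x ^ 6 * D 0 4 f x y + ((-56 : ℂ) + (0 : ℂ) * Complex.I) * Sc x ^ 6 * D 0 6 f x y + ((0 : ℂ) + (816 : ℂ) * Complex.I) * Sc x ^ 3 * D 1 1 f x y + ((0 : ℂ) + (-3366 : ℂ) * Complex.I) * Sc x ^ 5 * D 1 1 f x y + ((0 : ℂ) + (72 : ℂ) * Complex.I) * Sc x ^ 3 * D 1 3 f x y + ((0 : ℂ) + (270 : ℂ) *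 Complex.I) * Sc x ^ 5 * D 1 3 f x y + ((0 : ℂ) + (126 : ℂ) * Complex.I) * Sc x ^ 5 * D 1 5 f x y + ((4 : ℂ) + (0 : ℂ) * Complex.I) * Sc x ^ 0 * D 2 0 f x y + ((72 : ℂ) + (0 : ℂ) * Complex.I) * Sc x ^ 2 * D 2 0 f x y + ((-675 : ℂ) + (0 : ℂ) * Complex.I) * Sc x ^ 4 * D 2 0 f x y + ((90 : ℂ) + (0 : ℂ) * Complex.I) * Sc x ^ 2 * D 2 2 f x y + ((-1305 : ℂ) + (0 : ℂ) * Complex.I) * Sc x ^ 4 * D 2 2 f x y + ((-45 : ℂ) + (0 : ℂ) * Complex.I) * Sc x ^ 4 * D 2 4 f x y + ((0 : ℂ) + (18 : ℂ) * Complex.I) * Sc x ^ 1 * D 3 1 f x y + ((0 : ℂ) + (-72 : ℂ) * Complex.I) * Sc x ^ 3 * D 3 1 f x y + ((0 : ℂ) + (120 : ℂ) * Complex.I) * Sc x ^ 3 * D 3 3 f x y + ((-1 : ℂ) + (0 : ℂ) * Complex.I) * Sc x ^ 0 * D 4 0 f x y + ((-90 : ℂ) + (0 : ℂ) * Complex.I)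 * Sc x ^ 2 * D 4 0 f x y + ((-18 : ℂ) + (0 : ℂ) * Complex.I) * Sc x ^ 2 * D 4 2 f x y + ((0 : ℂ) + (18 : ℂ) * Complex.I) * Sc x ^ 1 * D 5 1 f x y + ((-5 : ℂ) + (0 : ℂ) * Complex.I) * Sc x ^ 0 * D 6 0 f x y) * Cc_sq hx

lemma hcA2 (f : F2) : ∀ x ∈ Set.Ioo (0:ℝ) Real.pi, ∀ y : ℝ,
    rL f (ldF (-1) T1) x y = rL f A2 x y := by
  intro x hx y
  have hrel := Cc_sq hx
  simp only [T1, A2, loF, ldF, dThT, phT, phTd, cT, smT, List.flatMap_cons, List.flatMap_nil, List.map_cons, List.map_nil, List.cons_append, List.nil_append, List.append_nil, rL, rT, List.sum_cons, List.sum_nil, Nat.reduceAdd, Nat.reduceSub, Int.reduceNeg]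
  push_cast
  linear_combination (((-2 : ℂ) + (0 : ℂ) * Complex.I) * Sc x ^ 0 * D 0 0 f x y) * Cc_sq hx

lemma hcA3 (f : F2) : ∀ x ∈ Set.Ioo (0:ℝ) Real.pi, ∀ y : ℝ,
    rL f (A2 ++ T0.map (smT (-2))) x y = rL f A3 x y := by
  intro x hx y
  simp only [A2, T0, A3, loF, ldF, dThT, phT, phTd, cT, smT, List.flatMap_cons, List.flatMap_nil, List.map_cons, List.map_nil, List.cons_append, List.nil_append, List.append_nil, rL, rT, List.sum_cons, List.sum_nil, Nat.reduceAdd, Nat.reduceSub, Int.reduceNeg]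
  push_cast
  ring

lemma hcA4 (f : F2) : ∀ x ∈ Set.Ioo (0:ℝ) Real.pi, ∀ y : ℝ,
    rL f (loF 2 A3) x y = rL f A4 x y := by
  intro x hx y
  have hrel := Cc_sq hx
  simp only [A3, A4, loF, ldF, dThT, phT, phTd, cT, smT, List.flatMap_cons, List.flatMap_nil, List.map_cons, List.map_nil, List.cons_append, List.nil_append, List.append_nil, rL, rT, List.sum_cons, List.sum_nil, Nat.reduceAdd, Nat.reduceSub, Int.reduceNeg]
  push_cast
  linear_combination (((0 : ℂ) + (-4 : ℂ) * Complex.I) * Sc x ^ 1 * D 0 1 f x y + ((2 : ℂ) + (0 : ℂ) * Complex.I) * Sc x ^ 0 * D 1 0 f x y) * Cc_sq hx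

lemma hcA5 (f : F2) : ∀ x ∈ Set.Ioo (0:ℝ) Real.pi, ∀ y : ℝ,
    rL f (ldF (-1) A4) x y = rL f A5 x y := by
  intro x hx y
  have hrel := Cc_sq hx
  simp only [A4, A5, loF, ldF, dThT, phT, phTd, cT, smT, List.flatMap_cons, List.flatMap_nil, List.map_cons, List.map_nil, List.cons_append, List.nil_append, List.append_nil, rL, rT, List.sum_cons, List.sum_nil, Nat.reduceAdd, Nat.reduceSub, Int.reduceNeg]
  push_cast
  linear_combination (((-12 : ℂ) + (0 : ℂ) * Complex.I) * Sc x ^ 2 * D 0 2 f x y + ((0 : ℂ) + (6 : ℂ) * Complex.I) * Sc x ^ 1 * D 1 1 f x y + ((-3 : ℂ) + (0 : ℂ) * Complex.I) * Sc x ^ 0 * D 2 0 f x y) * Cc_sq hx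

lemma hcA6 (f : F2) : ∀ x ∈ Set.Ioo (0:ℝ) Real.pi, ∀ y : ℝ,
    rL f (A5 ++ A3.map (smT (-2))) x y = rL f A6 x y := by
  intro x hx y
  simp only [A5, A3, A6, loF, ldF, dThT, phT, phTd, cT, smT, List.flatMap_cons, List.flatMap_nil, List.map_cons, List.map_nil, List.cons_append, List.nil_append, List.append_nil, rL, rT, List.sum_cons, List.sum_nil, Nat.reduceAdd, Nat.reduceSub, Int.reduceNeg]
  push_cast
  ring

lemma hcA7 (f : F2) : ∀ x ∈ Set.Ioo (0:ℝ) Real.pi, ∀ y : ℝ,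
    rL f (loF 2 A6) x y = rL f A7 x y := by
  intro x hx y
  have hrel := Cc_sq hx
  simp only [A6, A7, loF, ldF, dThT, phT, phTd, cT, smT, List.flatMap_cons, List.flatMap_nil, List.map_cons, List.map_nil, List.cons_append, List.nil_append, List.append_nil, rL, rT, List.sum_cons, List.sum_nil, Nat.reduceAdd, Nat.reduceSub, Int.reduceNeg]
  push_cast
  linear_combination (((0 : ℂ) + (-16 : ℂ) * Complex.I) * Sc x ^ 3 * D 0 1 f x y + ((0 : ℂ) + (8 : ℂ) * Complex.I) * Sc x ^ 3 * D 0 3 f x y + ((0 : ℂ) + (-8 : ℂ) * Complex.I) * Sc x ^ 1 * D 2 1 f x y + ((4 : ℂ) + (0 : ℂ) * Complex.I) * Sc x ^ 0 * D 3 0 f x y) * Cc_sq hx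

lemma hcA8 (f : F2) : ∀ x ∈ Set.Ioo (0:ℝ) Real.pi, ∀ y : ℝ,
    rL f (ldF (-1) A7) x y = rL f A8 x y := by
  intro x hx y
  have hrel := Cc_sq hx
  simp only [A7, A8, loF, ldF, dThT, phT, phTd, cT, smT, List.flatMap_cons, List.flatMap_nil, List.map_cons, List.map_nil, List.cons_append, List.nil_append, List.append_nil, rL, rT, List.sum_cons, List.sum_nil, Nat.reduceAdd, Nat.reduceSub, Int.reduceNeg]
  push_cast
  linear_combination (((-120 : ℂ) + (0 : ℂ) * Complex.I) * Sc x ^ 4 * D 0 2 f x y + ((-30 : ℂ) + (0 : ℂ) * Complex.I) * Sc x ^ 4 * D 0 4 f x y + ((0 : ℂ) + (-68 : ℂ) * Complex.I) * Sc x ^ 3 * D 1 1 f x y + ((0 : ℂ) + (40 : ℂ) * Complex.I) * Sc x ^ 3 * D 1 3 f x y + ((2 : ℂ) + (0 : ℂ) * Complex.I) * Sc x ^ 0 * D 2 0 f x y + ((-27 : ℂ) + (0 : ℂ) * Complex.I) * Sc x ^ 2 * D 2 0 f x y + ((-18 : ℂ) + (0 : ℂ) * Complex.I) * Sc x ^ 2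 * D 2 2 f x y + ((0 : ℂ) + (12 : ℂ) * Complex.I) * Sc x ^ 1 * D 3 1 f x y + ((-4 : ℂ) + (0 : ℂ) * Complex.I) * Sc x ^ 0 * D 4 0 f x y) * Cc_sq hx

lemma hcA9 (f : F2) : ∀ x ∈ Set.Ioo (0:ℝ) Real.pi, ∀ y : ℝ,
    rL f (loF 2 A8) x y = rL f A9 x y := by
  intro x hx y
  have hrel := Cc_sq hx
  simp only [A8, A9, loF, ldF, dThT, phT, phTd, cT, smT, List.flatMap_cons, List.flatMap_nil, List.map_cons, List.map_nil, List.cons_append, List.nil_append, List.append_nil, rL, rT, List.sum_cons, List.sum_nil, Nat.reduceAdd, Nat.reduceSub, Int.reduceNeg]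
  push_cast
  linear_combination (((0 : ℂ) + (96 : ℂ) * Complex.I) * Sc x ^ 3 * D 0 1 f x y + ((0 : ℂ) + (-576 : ℂ) * Complex.I) * Sc x ^ 5 * D 0 1 f x y + ((0 : ℂ) + (24 : ℂ) * Complex.I) * Sc x ^ 3 * D 0 3 f x y + ((0 : ℂ) + (36 : ℂ) * Complex.I) * Sc x ^ 5 * D 0 5 f x y + ((-90 : ℂ) + (0 : ℂ) * Complex.I) * Sc x ^ 4 * D 1 0 f x y + ((-342 : ℂ) + (0 : ℂ) * Complex.I) * Sc x ^ 4 * D 1 2 f x y + ((18 : ℂ) + (0 : ℂ) * Complex.I) * Sc x ^ 4 * D 1 4 f x y + ((0 : ℂ) + (-12 : ℂ) * Complex.I) * Sc x ^ 1 * D 2 1 f x y + ((0 : ℂ) + (-12 : ℂ) * Complex.I) * Sc x ^ 3 * D 2 1 f x y + ((0 : ℂ) + (24 : ℂ) * Complex.I) * Sc x ^ 3 * D 2 3 f x y + ((6 : ℂ) + (0 : ℂ) * Complex.I) * Sc x ^ 0 * D 3 0 f x y + ((0 : ℂ) + (-12 : ℂ) * Complex.I) * Sc x ^ 1 * D 4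 1 f x y + ((6 : ℂ) + (0 : ℂ) * Complex.I) * Sc x ^ 0 * D 5 0 f x y) * Cc_sq hx

lemma hcA10 (f : F2) : ∀ x ∈ Set.Ioo (0:ℝ) Real.pi, ∀ y : ℝ,
    rL f (ldF (-1) A9) x y = rL f A10 x y := by
  intro x hx y
  have hrel := Cc_sq hx
  simp only [A9, A10, loF, ldF, dThT, phT, phTd, cT, smT, List.flatMap_cons, List.flatMap_nil, List.map_cons, List.map_nil, List.cons_append, List.nil_append, List.append_nil, rL, rT, List.sum_cons, List.sum_nil, Nat.reduceAdd, Nat.reduceSub, Int.reduceNeg]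
  push_cast
  linear_combination (((960 : ℂ) + (0 : ℂ) * Complex.I) * Sc x ^ 4 * D 0 2 f x y + ((-3584 : ℂ) + (0 : ℂ) * Complex.I) * Sc x ^ 6 * D 0 2 f x y + ((240 : ℂ) + (0 : ℂ) * Complex.I) * Sc x ^ 4 * D 0 4 f x y + ((-1120 : ℂ) + (0 : ℂ) * Complex.I) * Sc x ^ 6 * D 0 4 f x y + ((-56 : ℂ) + (0 : ℂ) * Complex.I) * Sc x ^ 6 * D 0 6 f x y + ((0 : ℂ) + (816 : ℂ) * Complex.I) * Sc x ^ 3 * D 1 1 f x y + ((0 : ℂ) + (-3366 : ℂ) * Complex.I) * Sc x ^ 5 * D 1 1 f x y + ((0 : ℂ) + (72 : ℂ) * Complex.I) * Sc x ^ 3 * D 1 3 f x y + ((0 : ℂ) + (270 : ℂ) * Complex.I) * Sc x ^ 5 * D 1 3 f x y + ((0 : ℂ) + (126 : ℂ) * Complex.I) * Sc x ^ 5 * D 1 5 f x y + ((4 : ℂ) + (0 : ℂ) * Complex.I) * Sc x ^ 0 * D 2 0 f x y + ((72 : ℂ) + (0 : ℂ) * Complex.I) * Sc x ^ 2 * D 2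 0 f x y + ((-675 : ℂ) + (0 : ℂ) * Complex.I) * Sc x ^ 4 * D 2 0 f x y + ((90 : ℂ) + (0 : ℂ) * Complex.I) * Sc x ^ 2 * D 2 2 f x y + ((-1305 : ℂ) + (0 : ℂ) * Complex.I) * Sc x ^ 4 * D 2 2 f x y + ((-45 : ℂ) + (0 : ℂ) * Complex.I) * Sc x ^ 4 * D 2 4 f x y + ((0 : ℂ) + (18 : ℂ) * Complex.I) * Sc x ^ 1 * D 3 1 f x y + ((0 : ℂ) + (-72 : ℂ) * Complex.I) * Sc x ^ 3 * D 3 1 f x y + ((0 : ℂ) + (120 : ℂ) * Complex.I) * Sc x ^ 3 * D 3 3 f x y + ((-1 : ℂ) + (0 : ℂ) * Complex.I) * Sc x ^ 0 * D 4 0 f x y + ((-90 : ℂ) + (0 : ℂ) * Complex.I) * Sc x ^ 2 * D 4 0 f x y + ((-18 : ℂ) + (0 : ℂ) * Complex.I) * Sc x ^ 2 * D 4 2 f x y + ((0 : ℂ) + (18 : ℂ) * Complex.I) * Sc x ^ 1 * D 5 1 f x y + ((-5 : ℂ) + (0 : ℂ) * Complex.I) * Sc x ^ 0 * D 6 0 f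 x y) * Cc_sq hx

/-- The operator identity
`𝓛₋₁†𝓛₀†𝓛₁†𝓛₂†𝓛₋₁𝓛₀𝓛₁𝓛₂ f = (𝓛₋₁†𝓛₂)²(𝓛₋₁†𝓛₂ − 2)² f`
at every point of `(0,π) × ℝ`. -/
theorem statement12 (f : F2) (hf : Smooth2 f) :
    ∀ ϑ ∈ Set.Ioo (0 : ℝ) Real.pi, ∀ φ : ℝ,
      Ld (-1) (Ld 0 (Ld 1 (Ld 2 (Lo (-1) (Lo 0 (Lo 1 (Lo 2 f))))))) ϑ φ
        = Bop (Bop (BopM (BopM f))) ϑ φ := by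
  have h0 : ∀ x ∈ Set.Ioo (0:ℝ) Real.pi, ∀ y : ℝ, f x y = rL f T0 x y := by
    intro x hx y
    simp only [T0, rL, rT, List.map_cons, List.map_nil, List.sum_cons, List.sum_nil,
      D_zero, pow_zero]
    push_cast
    ring
  have h1 := step_lo hf 2 h0 (hcT1 f)
  have h2 := step_lo hf 1 h1 (hcT2 f)
  have h3 := step_lo hf 0 h2 (hcT3 f)
  have h4 := step_lo hf (-1) h3 (hcT4 f)
  have h5 := step_ld hf 2 h4 (hcT5 f)
  have h6 := step_ld hf 1 h5 (hcT6 f)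
  have h7 := step_ld hf 0 h6 (hcT7 f)
  have h8 := step_ld hf (-1) h7 (hcT8 f)
  have a2 := step_ld hf (-1) h1 (hcA2 f)
  have a3 : ∀ x ∈ Set.Ioo (0:ℝ) Real.pi, ∀ y : ℝ, BopM f x y = rL f A3 x y :=
    step_sub a2 h0 (hcA3 f)
  have a4 := step_lo hf 2 a3 (hcA4 f)
  have a5 := step_ld hf (-1) a4 (hcA5 f)
  have a6 : ∀ x ∈ Set.Ioo (0:ℝ) Real.pi, ∀ y : ℝ, BopM (BopM f) x y = rL f A6 x y :=
    step_sub a5 a3 (hcA6 f)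
  have a7 := step_lo hf 2 a6 (hcA7 f)
  have a8 := step_ld hf (-1) a7 (hcA8 f)
  have a9 := step_lo hf 2 a8 (hcA9 f)
  have a10 := step_ld hf (-1) a9 (hcA10 f)
  intro ϑ hϑ φ
  exact (h8 ϑ hϑ φ).trans ((a10 ϑ hϑ φ)).symm


end Ang
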